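/- Let A be a unital associative algebra over a field F with char(F) ≠ 2, d and g derivations of A, J a two-sided ideal with [g(x), d(x)] ∈ J for all x ∈ A, and let B = A × (A/J) be the algebra with product (x,u)⋆(y,v) = (xy, π(d(x)g(y)) + π(x)v + uπ(y)). Then the map φ : A → B given by φ(x) = (x, ½π((d∘g)(x))) is a Jordan homomorphism. -/

import Mathlib

theorem annihilator_extension_jordan_hom
    (F A C : Type*) [Field F] [Ring A] [Algebra F A] [Ring C] [Algebra F C]
    (hchar : (2 : F) ≠ 0)
    (d g : A →ₗ[F] A)
    (hd : ∀ x y : A, d (x * y) = d x * y + x * d y)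
    (hg : ∀ x y : A, g (x * y) = g x * y + x * g y)
    (π : A →ₐ[F] C) (hπ : Function.Surjective π)
    (hJid : ∀ x : A, π (g x * d x - d x * g x) = 0)
    (mul : A × C → A × C → A × C)
    (hmul : ∀ p q : A × C,
      mul p q = (p.1 * q.1, π (d p.1 * g q.1) + π p.1 * q.2 + p.2 * π q.1))
    (φ : A → A × C)
    (hφ : ∀ x : A, φ x = (x, (2 : F)⁻¹ • π (d (g x)))) :
    ∀ x y : A, φ (x * y + y * x) = mul (φ x) (φ y) + mul (φ y) (φ x) := by
  intro x y
  have key : π (g x * d y) + π (g y * d x) = π (d x * g y) + π (d y * g x) := by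
    have hA : g x * d y + g y * d x - (d x * g y + d y * g x)
        = (g (x+y) * d (x+y) - d (x+y) * g (x+y)) - (g x * d x - d x * g x)
          - (g y * d y - d y * g y) := by
      simp only [map_add]; noncomm_ring
    have h : π (g x * d y + g y * d x - (d x * g y + d y * g x)) = 0 := by
      rw [hA, map_sub, map_sub, hJid, hJid, hJid]; simp
    rw [map_sub, map_add, map_add, sub_eq_zero] at h
    exact h
  have h2 : ∀ c : C, (2:F)⁻¹ • (c + c) = c := by
    intro c
    rw [← two_smul F c, smul_smul, inv_mul_cancel₀ hchar, one_smul]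
  rw [hmul, hmul, hφ, hφ, hφ]
  simp only [Prod.mk.injEq, Prod.mk_add_mk, Prod.fst, Prod.snd]
  constructor
  · noncomm_ring
  · simp only [map_add, hd, hg, map_mul, mul_smul_comm, smul_mul_assoc]
    have key' : π (g x) * π (d y) + π (g y) * π (d x)
        = π (d x) * π (g y) + π (d y) * π (g x) := by simpa [map_mul] using key
    rw [show π (d (g x)) * π y + π (g x) * π (d y) + (π (d x) * π (g y) + π x * π (d (g y)))
        + (π (d (g y)) * π x + π (g y) * π (d x) + (π (d y) * π (g x) + π y * π (d (g x))))
        = (π (g x) * π (d y) + π (g y) * π (d x)) + (π (d x) * π (g y) + π (d y) * π (g x))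
          + (π (d (g x)) * π y + π x * π (d (g y)) + (π (d (g y)) * π x + π y * π (d (g x))))
        from by abel, key', smul_add, h2, smul_add, smul_add, smul_add]
    abel
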